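/- Let R be a G-graded unital ring which is G-controlled. Then the following are equivalent: (i) R is graded simple; (ii) R is a simple ring; (iii) R is strongly G-graded (R_g R_h = R_{gh} for all g, h); (iv) the gradation is left non-degenerate (R_g R_{g⁻¹} ≠ {0} for all g with R_g ≠ 0). -/

import Mathlib

open DirectSum Pointwise

namespace Controlled

variable {G R : Type*} [AddGroup G] [DecidableEq G] [Ring R]

/-- `P` is an `R_e`-sub-bimodule of `R` (w.r.t. the grading `𝒜`, written additively,
so `R_e = 𝒜 0`). -/
def IsSubBimodule (𝒜 : G → AddSubgroup R) (P : AddSubgroup R) : Prop :=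
  ∀ a ∈ 𝒜 0, ∀ x ∈ P, a * x ∈ P ∧ x * a ∈ P

/-- The `R_e`-bimodule `R_H = ⊕_{h ∈ H} R_h` (internally, the subgroup generated by
the `R_h`, `h ∈ H`; the sum is automatically direct). `R_∅ = ⊥ = {0}`. -/
def RH (𝒜 : G → AddSubgroup R) (H : Set G) : AddSubgroup R := ⨆ h ∈ H, 𝒜 h

/-- An `R_e`-bimodule isomorphism between additive subgroups `P` and `Q` of `R`:
an additive equivalence compatible with left and right multiplication by `R_e = 𝒜 0`. -/
structure BimodIso (𝒜 : G → AddSubgroup R) (P Q : AddSubgroup R) where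
  toEquiv : P ≃+ Q
  map_left : ∀ (a x : R), a ∈ 𝒜 0 → ∀ (hx : x ∈ P) (hax : a * x ∈ P),
    (toEquiv ⟨a * x, hax⟩ : R) = a * (toEquiv ⟨x, hx⟩ : R)
  map_right : ∀ (a x : R), a ∈ 𝒜 0 → ∀ (hx : x ∈ P) (hxa : x * a ∈ P),
    (toEquiv ⟨x * a, hxa⟩ : R) = (toEquiv ⟨x, hx⟩ : R) * a

/-- `R` is `G`-controlled: `H ↦ R_H` is a bijection from subsets of `G` onto the
`R_e`-sub-bimodules of `R`, and `R_S ≅ R_T` (as `R_e`-bimodules) iff `S = T`. -/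
def IsControlled (𝒜 : G → AddSubgroup R) : Prop :=
  (∀ H : Set G, IsSubBimodule 𝒜 (RH 𝒜 H)) ∧
  Function.Injective (RH 𝒜) ∧
  (∀ P : AddSubgroup R, IsSubBimodule 𝒜 P → ∃ H : Set G, RH 𝒜 H = P) ∧
  (∀ S T : Set G, Nonempty (BimodIso 𝒜 (RH 𝒜 S) (RH 𝒜 T)) ↔ S = T)

/-- `P` is a (nonzero) simple `R_e`-bimodule contained in `R`. -/
def IsSimpleBimod (𝒜 : G → AddSubgroup R) (P : AddSubgroup R) : Prop :=
  P ≠ ⊥ ∧ ∀ Q : AddSubgroup R, Q ≤ P → IsSubBimodule 𝒜 Q → Q = ⊥ ∨ Q = P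

/-- The product `AB` of two additive subgroups of `R`: all finite sums of products. -/
def mulSub (A B : AddSubgroup R) : AddSubgroup R :=
  AddSubgroup.closure ((A : Set R) * (B : Set R))

/-- `R` is strongly graded: `R_g R_h = R_{g+h}` for all `g, h`. -/
def IsStronglyGraded (𝒜 : G → AddSubgroup R) : Prop :=
  ∀ g h : G, mulSub (𝒜 g) (𝒜 h) = 𝒜 (g + h)

/-- `C_R(R_e) = Z(R_e)` as subsets of `R`. -/
def CentralizerEqCenter (𝒜 : G → AddSubgroup R) : Prop :=
  {x : R | ∀ r ∈ 𝒜 0, x * r = r * x} = {x : R | x ∈ 𝒜 0 ∧ ∀ r ∈ 𝒜 0, x * r = r * x}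

/-- A two-sided ideal `I` is graded if each homogeneous component of each of its
elements again lies in `I` (equivalently, `I = ⊕_g (I ∩ R_g)`). -/
def IsGradedIdeal (𝒜 : G → AddSubgroup R) [GradedRing 𝒜] (I : TwoSidedIdeal R) : Prop :=
  ∀ x ∈ I, ∀ g : G, (DirectSum.decompose 𝒜 x g : R) ∈ I

/-- `R` is graded simple: the only graded two-sided ideals are `{0}` and `R`. -/
def IsGradedSimple (𝒜 : G → AddSubgroup R) [GradedRing 𝒜] : Prop :=
  ∀ I : TwoSidedIdeal R, IsGradedIdeal 𝒜 I → I = ⊥ ∨ I = ⊤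

end Controlled

variable {G R : Type*} [AddGroup G] [DecidableEq G] [Ring R]


section Aux
open Controlled
open Controlled

lemma rh_empty (𝒜 : G → AddSubgroup R) : RH 𝒜 (∅ : Set G) = ⊥ := by
  simp [RH]

lemma rh_singleton (𝒜 : G → AddSubgroup R) (a : G) : RH 𝒜 ({a} : Set G) = 𝒜 a := by
  simp [RH]

lemma A_le_RH (𝒜 : G → AddSubgroup R) {H : Set G} {h : G} (hh : h ∈ H) :
    𝒜 h ≤ RH 𝒜 H :=
  le_biSup (fun h => 𝒜 h) hh

lemma A_ne_bot {𝒜 : G → AddSubgroup R} (hc : IsControlled 𝒜) (g : G) : 𝒜 g ≠ ⊥ := by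
  intro h
  have h1 : RH 𝒜 ({g} : Set G) = RH 𝒜 (∅ : Set G) := by
    rw [rh_empty, rh_singleton, h]
  exact Set.singleton_ne_empty g (hc.2.1 h1)

lemma nontrivialR {𝒜 : G → AddSubgroup R} (hc : IsControlled 𝒜) : Nontrivial R := by
  have h := A_ne_bot hc 0
  obtain ⟨x, _, hx⟩ : ∃ x ∈ 𝒜 (0:G), x ≠ 0 := by
    by_contra hcon
    push_neg at hcon
    exact h ((AddSubgroup.eq_bot_iff_forall _).mpr hcon)
  exact ⟨x, 0, hx⟩

lemma mem_mulSub {A B : AddSubgroup R} {a b : R} (ha : a ∈ A) (hb : b ∈ B) :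
    a * b ∈ mulSub A B :=
  AddSubgroup.subset_closure (Set.mul_mem_mul ha hb)

lemma mulSub_le {A B C : AddSubgroup R} (h : ∀ a ∈ A, ∀ b ∈ B, a * b ∈ C) :
    mulSub A B ≤ C :=
  (AddSubgroup.closure_le C).mpr (Set.mul_subset_iff.mpr h)

lemma mulSub_induction {A B : AddSubgroup R} {p : R → Prop}
    (mem : ∀ a ∈ A, ∀ b ∈ B, p (a * b)) (zero : p 0)
    (add : ∀ x y, p x → p y → p (x + y)) (neg : ∀ x, p x → p (-x)) :
    ∀ x ∈ mulSub A B, p x := by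
  intro x hx
  refine AddSubgroup.closure_induction (p := fun y _ => p y) ?_ zero
    (fun u v _ _ hu hv => add u v hu hv) (fun u _ hu => neg u hu) hx
  rintro y ⟨a, ha, b, hb, rfl⟩
  exact mem a ha b hb

lemma mulSub_le_graded (𝒜 : G → AddSubgroup R) [GradedRing 𝒜] (g h : G) :
    mulSub (𝒜 g) (𝒜 h) ≤ 𝒜 (g + h) :=
  mulSub_le fun _ ha _ hb => SetLike.mul_mem_graded ha hb

lemma subBimodule_le_single {𝒜 : G → AddSubgroup R} (hc : IsControlled 𝒜)
    {P : AddSubgroup R} (hP : IsSubBimodule 𝒜 P) {c : G} (hle : P ≤ 𝒜 c) :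
    P = ⊥ ∨ P = 𝒜 c := by
  obtain ⟨H, hH⟩ := hc.2.2.1 P hP
  have hun : RH 𝒜 (H ∪ {c}) = RH 𝒜 H ⊔ RH 𝒜 ({c} : Set G) := iSup_union
  have h1 : RH 𝒜 (H ∪ {c}) = RH 𝒜 ({c} : Set G) := by
    rw [hun, rh_singleton, hH]
    exact sup_eq_right.mpr hle
  have h2 : H ∪ {c} = {c} := hc.2.1 h1
  have hsub : H ⊆ {c} := fun x hx => h2 ▸ Set.mem_union_left _ hx
  rcases Set.subset_singleton_iff_eq.mp hsub with h | h
  · left; rw [← hH, h, rh_empty]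
  · right; rw [← hH, h, rh_singleton]

lemma isSubBimodule_mulSub (𝒜 : G → AddSubgroup R) [GradedRing 𝒜] (g h : G) :
    IsSubBimodule 𝒜 (mulSub (𝒜 g) (𝒜 h)) := by
  intro a ha x hx
  constructor
  · refine mulSub_induction (p := fun x => a * x ∈ mulSub (𝒜 g) (𝒜 h)) ?_ ?_ ?_ ?_ x hx
    · intro u hu v hv
      rw [← mul_assoc]
      have h1 : a * u ∈ 𝒜 g := by
        have := SetLike.mul_mem_graded ha hu
        rwa [zero_add] at this
      exact mem_mulSub h1 hv
    · show a * (0:R) ∈ _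
      rw [mul_zero]; exact zero_mem _
    · intro x y px py; show a * (x + y) ∈ _; rw [mul_add]; exact add_mem px py
    · intro x px; show a * (-x) ∈ _; rw [mul_neg]; exact neg_mem px
  · refine mulSub_induction (p := fun x => x * a ∈ mulSub (𝒜 g) (𝒜 h)) ?_ ?_ ?_ ?_ x hx
    · intro u hu v hv
      rw [mul_assoc]
      have h1 : v * a ∈ 𝒜 h := by
        have := SetLike.mul_mem_graded hv ha
        rwa [add_zero] at this
      exact mem_mulSub hu h1
    · show (0:R) * a ∈ _
      rw [zero_mul]; exact zero_mem _
    · intro x y px py; show (x + y) * a ∈ _; rw [add_mul]; exact add_mem px py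
    · intro x px; show (-x) * a ∈ _; rw [neg_mul]; exact neg_mem px

lemma mulSub_dichotomy {𝒜 : G → AddSubgroup R} [GradedRing 𝒜] (hc : IsControlled 𝒜) (g h : G) :
    mulSub (𝒜 g) (𝒜 h) = ⊥ ∨ mulSub (𝒜 g) (𝒜 h) = 𝒜 (g + h) :=
  subBimodule_le_single hc (isSubBimodule_mulSub 𝒜 g h) (mulSub_le_graded 𝒜 g h)

lemma mul_right_eq_zero {A B : AddSubgroup R} {x : R} (hB : ∀ b ∈ B, b * x = 0) :
    ∀ y ∈ mulSub A B, y * x = 0 := by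
  refine mulSub_induction ?_ (by rw [zero_mul]) ?_ ?_
  · intro a _ b hb; rw [mul_assoc, hB b hb, mul_zero]
  · intro u v hu hv; rw [add_mul, hu, hv, add_zero]
  · intro u hu; rw [neg_mul, hu, neg_zero]

lemma mul_left_eq_zero {A B : AddSubgroup R} {x : R} (hA : ∀ a ∈ A, x * a = 0) :
    ∀ y ∈ mulSub A B, x * y = 0 := by
  refine mulSub_induction ?_ (by rw [mul_zero]) ?_ ?_
  · intro a ha b _; rw [← mul_assoc, hA a ha, zero_mul]
  · intro u v hu hv; rw [mul_add, hu, hv, add_zero]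
  · intro u hu; rw [mul_neg, hu, neg_zero]

lemma symm_bot {𝒜 : G → AddSubgroup R} [GradedRing 𝒜] (hc : IsControlled 𝒜) {g : G}
    (h0 : mulSub (𝒜 g) (𝒜 (-g)) = ⊥) : mulSub (𝒜 (-g)) (𝒜 g) = ⊥ := by
  by_contra hne
  have heq : mulSub (𝒜 (-g)) (𝒜 g) = 𝒜 0 := by
    rcases mulSub_dichotomy hc (-g) g with h | h
    · exact absurd h hne
    · rwa [neg_add_cancel] at h
  have hgbot : 𝒜 g = ⊥ := by
    rw [AddSubgroup.eq_bot_iff_forall]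
    intro x hx
    have h1 : (1 : R) ∈ mulSub (𝒜 (-g)) (𝒜 g) := heq ▸ SetLike.one_mem_graded 𝒜
    have h2 := mul_left_eq_zero (A := 𝒜 (-g)) (B := 𝒜 g) (x := x) ?_ 1 h1
    · rwa [mul_one] at h2
    · intro a ha
      have : x * a ∈ mulSub (𝒜 g) (𝒜 (-g)) := mem_mulSub hx ha
      rw [h0] at this
      exact AddSubgroup.mem_bot.mp this
  exact A_ne_bot hc g hgbot

lemma key_bot {𝒜 : G → AddSubgroup R} [GradedRing 𝒜] (hc : IsControlled 𝒜) {g : G}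
    (hg : mulSub (𝒜 g) (𝒜 (-g)) = ⊥) (c : G)
    (hcg : mulSub (𝒜 c) (𝒜 g) ≠ ⊥) :
    mulSub (𝒜 (c + g)) (𝒜 (-(c + g))) = ⊥ := by
  have hcgEq : mulSub (𝒜 c) (𝒜 g) = 𝒜 (c + g) :=
    (mulSub_dichotomy hc c g).resolve_left hcg
  by_contra hne
  have hne' : mulSub (𝒜 (-(c + g))) (𝒜 (c + g)) ≠ ⊥ := by
    intro hb
    apply hne
    have := symm_bot hc (g := -(c + g)) (by rw [neg_neg]; exact hb)
    rwa [neg_neg] at this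
  have heq : mulSub (𝒜 (-(c + g))) (𝒜 (c + g)) = 𝒜 0 := by
    rcases mulSub_dichotomy hc (-(c + g)) (c + g) with h | h
    · exact absurd h hne'
    · rwa [neg_add_cancel] at h
  have hbot : 𝒜 (-g) = ⊥ := by
    rw [AddSubgroup.eq_bot_iff_forall]
    intro x hx
    have h1 : (1 : R) ∈ mulSub (𝒜 (-(c + g))) (𝒜 (c + g)) := heq ▸ SetLike.one_mem_graded 𝒜
    have hkill : ∀ b ∈ 𝒜 (c + g), b * x = 0 := by
      intro b hb
      rw [← hcgEq] at hb
      refine mul_right_eq_zero ?_ b hb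
      intro w hw
      have : w * x ∈ mulSub (𝒜 g) (𝒜 (-g)) := mem_mulSub hw hx
      rw [hg] at this
      exact AddSubgroup.mem_bot.mp this
    have h2 := mul_right_eq_zero (A := 𝒜 (-(c + g))) hkill 1 h1
    rwa [one_mul] at h2
  exact A_ne_bot hc (-g) hbot

/-- Projection onto the `g`-th component, as an additive monoid hom. -/
def projA (𝒜 : G → AddSubgroup R) [GradedRing 𝒜] (g : G) : R →+ R where
  toFun x := (DirectSum.decompose 𝒜 x g : R)
  map_zero' := by simp
  map_add' x y := by simp

lemma projA_RH_mem (𝒜 : G → AddSubgroup R) [GradedRing 𝒜] (H : Set G) (g : G) :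
    ∀ x ∈ RH 𝒜 H, projA 𝒜 g x ∈ RH 𝒜 H := by
  intro x hx
  have hle : RH 𝒜 H ≤ (RH 𝒜 H).comap (projA 𝒜 g) := by
    show (⨆ h ∈ H, 𝒜 h) ≤ _
    refine iSup₂_le fun h hh => ?_
    intro y hy
    rw [AddSubgroup.mem_comap]
    by_cases hgh : h = g
    · subst hgh
      have h1 : projA 𝒜 h y = y := DirectSum.decompose_of_mem_same 𝒜 hy
      rw [h1]
      exact A_le_RH 𝒜 hh hy
    · have h1 : projA 𝒜 g y = 0 := DirectSum.decompose_of_mem_ne 𝒜 hy hgh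
      rw [h1]
      exact zero_mem _
  exact AddSubgroup.mem_comap.mp (hle hx)


lemma key_proj_zero {𝒜 : G → AddSubgroup R} [GradedRing 𝒜] (hc : IsControlled 𝒜) {g : G}
    (hbot : mulSub (𝒜 g) (𝒜 (-g)) = ⊥) {a : R} (ha : a ∈ 𝒜 g) (r s : R) :
    projA 𝒜 (0 : G) (r * a * s) = 0 := by
  revert s
  refine DirectSum.Decomposition.inductionOn 𝒜
    (motive := fun r => ∀ s : R, projA 𝒜 (0 : G) (r * a * s) = 0) ?_ ?_ ?_ r
  · intro s
    rw [zero_mul, zero_mul, map_zero]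
  · rintro c ⟨rc, hrc⟩ s
    show projA 𝒜 (0 : G) (rc * a * s) = 0
    refine DirectSum.Decomposition.inductionOn 𝒜
      (motive := fun s => projA 𝒜 (0 : G) (rc * a * s) = 0) ?_ ?_ ?_ s
    · show projA 𝒜 (0 : G) (rc * a * 0) = 0
      rw [mul_zero, map_zero]
    · rintro d ⟨sd, hsd⟩
      show projA 𝒜 (0 : G) (rc * a * sd) = 0
      by_cases h0 : c + g + d = 0
      · have hz : rc * a * sd = 0 := by
          by_cases hcg : mulSub (𝒜 c) (𝒜 g) = ⊥
          · have : rc * a ∈ mulSub (𝒜 c) (𝒜 g) := mem_mulSub hrc ha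
            rw [hcg] at this
            rw [AddSubgroup.mem_bot.mp this, zero_mul]
          · have hb := key_bot hc hbot c hcg
            have hd : -(c + g) = d := neg_eq_of_add_eq_zero_right h0
            have h1 : rc * a ∈ 𝒜 (c + g) := mulSub_le_graded 𝒜 c g (mem_mulSub hrc ha)
            have h2 : (rc * a) * sd ∈ mulSub (𝒜 (c + g)) (𝒜 (-(c + g))) :=
              mem_mulSub h1 (by rw [hd]; exact hsd)
            rw [hb] at h2
            exact AddSubgroup.mem_bot.mp h2
        rw [hz, map_zero]
      · have hmem : rc * a * sd ∈ 𝒜 (c + g + d) :=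
          SetLike.mul_mem_graded (SetLike.mul_mem_graded hrc ha) hsd
        exact DirectSum.decompose_of_mem_ne 𝒜 hmem h0
    · intro u v hu hv
      show projA 𝒜 (0 : G) (rc * a * (u + v)) = 0
      rw [mul_add, map_add, hu, hv, add_zero]
  · intro u v hu hv s
    rw [add_mul, add_mul, map_add, hu s, hv s, add_zero]

lemma imp12 {𝒜 : G → AddSubgroup R} [GradedRing 𝒜] (hc : IsControlled 𝒜)
    (h : IsGradedSimple 𝒜) : IsSimpleRing R := by
  have : Nontrivial R := nontrivialR hc
  refine ⟨{ exists_pair_ne := ⟨⊥, ⊤, ?_⟩, eq_bot_or_eq_top := ?_ }⟩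
  · intro hbt
    have h1 : (1 : R) ∈ (⊥ : TwoSidedIdeal R) := by rw [hbt]; exact trivial
    exact one_ne_zero ((TwoSidedIdeal.mem_bot R).mp h1)
  · intro I
    refine h I ?_
    intro x hx g
    let P : AddSubgroup R :=
      { carrier := I
        zero_mem' := I.zero_mem
        add_mem' := fun ha hb => I.add_mem ha hb
        neg_mem' := fun ha => I.neg_mem ha }
    have hP : IsSubBimodule 𝒜 P := fun a _ y hy =>
      ⟨I.mul_mem_left a y hy, I.mul_mem_right y a hy⟩
    obtain ⟨H, hH⟩ := hc.2.2.1 P hP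
    have hxRH : x ∈ RH 𝒜 H := by rw [hH]; exact hx
    have := projA_RH_mem 𝒜 H g x hxRH
    rw [hH] at this
    exact this

lemma imp21 (𝒜 : G → AddSubgroup R) [GradedRing 𝒜] (h : IsSimpleRing R) :
    IsGradedSimple 𝒜 :=
  fun I _ => h.simple.eq_bot_or_eq_top I

lemma imp24 {𝒜 : G → AddSubgroup R} [GradedRing 𝒜] (hc : IsControlled 𝒜)
    (h : IsSimpleRing R) : ∀ g : G, 𝒜 g ≠ ⊥ → mulSub (𝒜 g) (𝒜 (-g)) ≠ ⊥ := by
  intro g hg hbot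
  have : Nontrivial R := nontrivialR hc
  let T : Set R := {y | ∃ r s : R, ∃ a ∈ 𝒜 g, y = r * a * s}
  let C := AddSubgroup.closure T
  have hml : ∀ {x y : R}, y ∈ C → x * y ∈ C := by
    intro x y hy
    refine AddSubgroup.closure_induction (p := fun y _ => x * y ∈ C) ?_ ?_ ?_ ?_ hy
    · rintro y ⟨r, s, a, ha, rfl⟩
      exact AddSubgroup.subset_closure ⟨x * r, s, a, ha, by simp [mul_assoc]⟩
    · show x * 0 ∈ C
      rw [mul_zero]; exact zero_mem C
    · intro u v _ _ hu hv; show x * (u + v) ∈ C; rw [mul_add]; exact add_mem hu hv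
    · intro u _ hu; show x * (-u) ∈ C; rw [mul_neg]; exact neg_mem hu
  have hmr : ∀ {x y : R}, x ∈ C → x * y ∈ C := by
    intro x y hx
    refine AddSubgroup.closure_induction (p := fun x _ => x * y ∈ C) ?_ ?_ ?_ ?_ hx
    · rintro x ⟨r, s, a, ha, rfl⟩
      exact AddSubgroup.subset_closure ⟨r, s * y, a, ha, by simp [mul_assoc]⟩
    · show (0:R) * y ∈ C
      rw [zero_mul]; exact zero_mem C
    · intro u v _ _ hu hv; show (u + v) * y ∈ C; rw [add_mul]; exact add_mem hu hv
    · intro u _ hu; show (-u) * y ∈ C; rw [neg_mul]; exact neg_mem hu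
  let J : TwoSidedIdeal R := TwoSidedIdeal.mk' C C.zero_mem
    (fun ha hb => add_mem ha hb) (fun ha => neg_mem ha) hml hmr
  have hprojC : ∀ y ∈ C, projA 𝒜 (0 : G) y = 0 := by
    have hle : C ≤ (projA 𝒜 (0 : G)).ker := by
      rw [AddSubgroup.closure_le]
      rintro y ⟨r, s, a, ha, rfl⟩
      exact key_proj_zero hc hbot ha r s
    intro y hy
    exact hle hy
  rcases h.simple.eq_bot_or_eq_top J with hJ | hJ
  · obtain ⟨x, hxmem, hxne⟩ : ∃ x ∈ 𝒜 g, x ≠ 0 := by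
      by_contra hcon
      push_neg at hcon
      exact hg ((AddSubgroup.eq_bot_iff_forall _).mpr hcon)
    have hxJ : x ∈ J := by
      rw [TwoSidedIdeal.mem_mk']
      exact AddSubgroup.subset_closure ⟨1, 1, x, hxmem, by rw [one_mul, mul_one]⟩
    rw [hJ, TwoSidedIdeal.mem_bot] at hxJ
    exact hxne hxJ
  · have h1 : (1 : R) ∈ J := by rw [hJ]; exact trivial
    rw [TwoSidedIdeal.mem_mk'] at h1
    have := hprojC 1 h1
    have hone : projA 𝒜 (0 : G) (1 : R) = 1 :=
      DirectSum.decompose_of_mem_same 𝒜 (SetLike.one_mem_graded 𝒜)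
    rw [hone] at this
    exact one_ne_zero this

lemma imp43 {𝒜 : G → AddSubgroup R} [GradedRing 𝒜] (hc : IsControlled 𝒜)
    (h4 : ∀ g : G, 𝒜 g ≠ ⊥ → mulSub (𝒜 g) (𝒜 (-g)) ≠ ⊥) : IsStronglyGraded 𝒜 := by
  have hfull : ∀ e : G, mulSub (𝒜 e) (𝒜 (-e)) = 𝒜 0 := by
    intro e
    rcases mulSub_dichotomy hc e (-e) with h | h
    · exact absurd h (h4 e (A_ne_bot hc e))
    · rwa [add_neg_cancel] at h
  intro g h
  refine le_antisymm (mulSub_le_graded 𝒜 g h) ?_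
  intro x hx
  have h1 : (1 : R) ∈ mulSub (𝒜 (-h)) (𝒜 h) := by
    have he := hfull (-h)
    rw [neg_neg] at he
    rw [he]
    exact SetLike.one_mem_graded 𝒜
  have hmul : ∀ y ∈ mulSub (𝒜 (-h)) (𝒜 h), x * y ∈ mulSub (𝒜 g) (𝒜 h) := by
    refine mulSub_induction ?_ ?_ ?_ ?_
    · intro u hu v hv
      rw [← mul_assoc]
      refine mem_mulSub ?_ hv
      have := SetLike.mul_mem_graded hx hu
      rwa [add_neg_cancel_right] at this
    · show x * (0:R) ∈ _
      rw [mul_zero]; exact zero_mem _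
    · intro u v hu hv; show x * (u + v) ∈ _; rw [mul_add]; exact add_mem hu hv
    · intro u hu; show x * (-u) ∈ _; rw [mul_neg]; exact neg_mem hu
  have := hmul 1 h1
  rwa [mul_one] at this

lemma imp34 {𝒜 : G → AddSubgroup R} [GradedRing 𝒜] (hc : IsControlled 𝒜)
    (h3 : IsStronglyGraded 𝒜) : ∀ g : G, 𝒜 g ≠ ⊥ → mulSub (𝒜 g) (𝒜 (-g)) ≠ ⊥ := by
  intro g _
  rw [h3 g (-g), add_neg_cancel]
  exact A_ne_bot hc 0

lemma imp42 {𝒜 : G → AddSubgroup R} [GradedRing 𝒜] (hc : IsControlled 𝒜)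
    (h4 : ∀ g : G, 𝒜 g ≠ ⊥ → mulSub (𝒜 g) (𝒜 (-g)) ≠ ⊥) : IsSimpleRing R := by
  have : Nontrivial R := nontrivialR hc
  refine ⟨{ exists_pair_ne := ⟨⊥, ⊤, ?_⟩, eq_bot_or_eq_top := ?_ }⟩
  · intro hbt
    have h1 : (1 : R) ∈ (⊥ : TwoSidedIdeal R) := by rw [hbt]; exact trivial
    exact one_ne_zero ((TwoSidedIdeal.mem_bot R).mp h1)
  · intro I
    by_cases hI : ∀ x ∈ I, x = (0 : R)
    · left
      refine SetLike.ext fun x => ⟨fun hx => (TwoSidedIdeal.mem_bot R).mpr (hI x hx),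
        fun hx => ?_⟩
      rw [(TwoSidedIdeal.mem_bot R).mp hx]
      exact I.zero_mem
    · right
      push_neg at hI
      obtain ⟨x0, hx0I, hx0⟩ := hI
      let P : AddSubgroup R :=
        { carrier := I
          zero_mem' := I.zero_mem
          add_mem' := fun ha hb => I.add_mem ha hb
          neg_mem' := fun ha => I.neg_mem ha }
      have hP : IsSubBimodule 𝒜 P := fun a _ y hy =>
        ⟨I.mul_mem_left a y hy, I.mul_mem_right y a hy⟩
      obtain ⟨H, hH⟩ := hc.2.2.1 P hP
      have hHne : H.Nonempty := by
        rcases Set.eq_empty_or_nonempty H with he | hne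
        · exfalso
          rw [he, rh_empty] at hH
          have : x0 ∈ (⊥ : AddSubgroup R) := by rw [hH]; exact hx0I
          exact hx0 (AddSubgroup.mem_bot.mp this)
        · exact hne
      obtain ⟨h, hh⟩ := hHne
      have hhI : ∀ y ∈ 𝒜 h, y ∈ I := by
        intro y hy
        have : y ∈ RH 𝒜 H := A_le_RH 𝒜 hh hy
        rw [hH] at this
        exact this
      have hne : mulSub (𝒜 (-h)) (𝒜 h) ≠ ⊥ := by
        have := h4 (-h) (A_ne_bot hc (-h))
        rwa [neg_neg] at this
      have heq : mulSub (𝒜 (-h)) (𝒜 h) = 𝒜 0 := by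
        rcases mulSub_dichotomy hc (-h) h with he | he
        · exact absurd he hne
        · rwa [neg_add_cancel] at he
      have hsubI : ∀ y ∈ mulSub (𝒜 (-h)) (𝒜 h), y ∈ I := by
        refine mulSub_induction ?_ I.zero_mem ?_ ?_
        · intro a _ b hb
          exact I.mul_mem_left a b (hhI b hb)
        · intro u v hu hv; exact I.add_mem hu hv
        · intro u hu; exact I.neg_mem hu
      have h1 : (1 : R) ∈ I := hsubI 1 (heq ▸ SetLike.one_mem_graded 𝒜)
      exact I.eq_top h1


end Aux

/-- For a `G`-controlled ring `R`, the following are equivalent: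
(i) `R` is graded simple; (ii) `R` is simple; (iii) `R` is strongly `G`-graded;
(iv) the grading is left non-degenerate. -/
theorem stmt12 (𝒜 : G → AddSubgroup R) [GradedRing 𝒜]
    (hc : Controlled.IsControlled 𝒜) :
    [Controlled.IsGradedSimple 𝒜,
     IsSimpleRing R,
     Controlled.IsStronglyGraded 𝒜,
     (∀ g : G, 𝒜 g ≠ ⊥ → Controlled.mulSub (𝒜 g) (𝒜 (-g)) ≠ ⊥)].TFAE := by
  tfae_have 1 → 2 := imp12 hc
  tfae_have 2 → 1 := imp21 𝒜
  tfae_have 2 → 4 := imp24 hc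
  tfae_have 4 → 3 := imp43 hc
  tfae_have 3 → 4 := imp34 hc
  tfae_have 4 → 2 := imp42 hc
  tfae_finish
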